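/- Let v_1,...,v_n be monotone subadditive valuations, A* be any allocation, and P̄ = (P̄_1,...,P̄_n) be a partial allocation such that (a) every bundle P̄_r is contained in some A*_i, (b) for each i and each r with P̄_r ⊆ A*_i, v_i(P̄_i) ≥ v_i(P̄_r), and (c) for each i and j, v_i(P̄_i) ≥ v_i(U_j) where U_j = A*_j \ (⋃_r P̄_r). Then NSW(P̄) ≥ (1/2) NSW(A*). -/

import Mathlib

/-- If a partial allocation P̄ satisfies: (a) each bundle P̄_r lies inside
some bundle A*_{σ r} of the allocation A*, (b) for each i and each r whose bundle lies
in A*_i, v_i(P̄_i) ≥ v_i(P̄_r), and (c) v_i(P̄_i) ≥ v_i(U_j) for the unassigned parts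
U_j = A*_j \ ⋃_r P̄_r, then NSW(P̄) ≥ (1/2)·NSW(A*). -/
theorem stmt_3 (n m : ℕ) (hn : 0 < n)
    (v : Fin n → Finset (Fin m) → ℝ)
    (hnonneg : ∀ i S, 0 ≤ v i S)
    (hnorm : ∀ i, v i ∅ = 0)
    (hmono : ∀ i (S T : Finset (Fin m)), S ⊆ T → v i S ≤ v i T)
    (hsub : ∀ i (S T : Finset (Fin m)), v i (S ∪ T) ≤ v i S + v i T)
    (A P : Fin n → Finset (Fin m))
    (hAdisj : ∀ i j, i ≠ j → Disjoint (A i) (A j))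
    (hAcomp : Finset.univ.biUnion A = (Finset.univ : Finset (Fin m)))
    (hPdisj : ∀ i j, i ≠ j → Disjoint (P i) (P j))
    (σ : Fin n → Fin n)
    (hσ : ∀ r, P r ⊆ A (σ r))
    (hb : ∀ i r, σ r = i → v i (P r) ≤ v i (P i))
    (hc : ∀ i j, v i (A j \ Finset.univ.biUnion P) ≤ v i (P i)) :
    (1 / 2) * (∏ i, v i (A i)) ^ ((n : ℝ)⁻¹) ≤ (∏ i, v i (P i)) ^ ((n : ℝ)⁻¹) := by
  set B := Finset.univ.biUnion P with hB
  set c : Fin n → ℝ := fun i => 1 + ((Finset.univ.filter (fun r => σ r = i)).card : ℝ)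
    with hcdef
  have hc1 : ∀ i, (1 : ℝ) ≤ c i := by
    intro i
    simp only [hcdef, le_add_iff_nonneg_right]
    positivity
  have hc0 : ∀ i, (0 : ℝ) ≤ c i := fun i => le_trans zero_le_one (hc1 i)
  -- key per-agent bound
  have key : ∀ i, v i (A i) ≤ c i * v i (P i) := by
    intro i
    have hsubset : A i ⊆ (A i \ B) ∪ ((Finset.univ.filter (fun r => σ r = i)).biUnion P) := by
      intro x hx
      by_cases hxB : x ∈ B
      · simp only [hB, Finset.mem_biUnion, Finset.mem_univ, true_and] at hxB
        obtain ⟨r, hr⟩ := hxB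
        have hxA : x ∈ A (σ r) := hσ r hr
        have hri : σ r = i := by
          by_contra h
          simpa using (hAdisj _ _ h).le_bot (Finset.mem_inter.mpr ⟨hxA, hx⟩)
        exact Finset.mem_union_right _ (Finset.mem_biUnion.mpr
          ⟨r, by simp [hri], hr⟩)
      · exact Finset.mem_union_left _ (Finset.mem_sdiff.mpr ⟨hx, hxB⟩)
    have hbi : ∀ s : Finset (Fin n), v i (s.biUnion P) ≤ ∑ r ∈ s, v i (P r) := by
      intro s
      induction s using Finset.induction_on with
      | empty => simp [hnorm i]
      | insert a s' h ih =>
        rw [Finset.biUnion_insert, Finset.sum_insert h]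
        exact le_trans (hsub i _ _) (by linarith)
    calc v i (A i) ≤ v i ((A i \ B) ∪ ((Finset.univ.filter (fun r => σ r = i)).biUnion P)) :=
          hmono i _ _ hsubset
      _ ≤ v i (A i \ B) + v i ((Finset.univ.filter (fun r => σ r = i)).biUnion P) := hsub i _ _
      _ ≤ v i (P i) + ∑ r ∈ Finset.univ.filter (fun r => σ r = i), v i (P r) :=
          add_le_add (hc i i) (hbi _)
      _ ≤ v i (P i) + ∑ r ∈ Finset.univ.filter (fun r => σ r = i), v i (P i) := by
          refine add_le_add_right (Finset.sum_le_sum ?_) _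
          intro r hr
          exact hb i r (Finset.mem_filter.mp hr).2
      _ = c i * v i (P i) := by
          rw [Finset.sum_const, nsmul_eq_mul, hcdef]; ring
  -- sum of fiber cards
  have hfib : ∑ i, ((Finset.univ.filter (fun r => σ r = i)).card : ℝ) = (n : ℝ) := by
    have := Finset.card_eq_sum_card_fiberwise
      (f := σ) (s := (Finset.univ : Finset (Fin n))) (t := Finset.univ)
      (fun x _ => Finset.mem_univ _)
    have h2 : (Finset.univ : Finset (Fin n)).card = n := Finset.card_univ.trans (by simp)
    rw [h2] at this
    exact_mod_cast this.symm
  have hsumc : ∑ i, c i = 2 * n := by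
    simp only [hcdef]
    rw [Finset.sum_add_distrib, hfib, Finset.sum_const, Finset.card_univ]
    simp; ring
  have hnR : (0 : ℝ) < n := by exact_mod_cast hn
  -- AM-GM
  have hAM : (∏ i, c i) ^ ((n : ℝ)⁻¹) ≤ 2 := by
    have h := Real.geom_mean_le_arith_mean_weighted Finset.univ
      (fun _ => (n : ℝ)⁻¹) c (fun i _ => by positivity)
      (by rw [Finset.sum_const, Finset.card_univ, Fintype.card_fin, nsmul_eq_mul]; field_simp)
      (fun i _ => hc0 i)
    rw [Real.finset_prod_rpow _ _ (fun i _ => hc0 i)] at h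
    calc (∏ i, c i) ^ ((n : ℝ)⁻¹) ≤ ∑ i, (n : ℝ)⁻¹ * c i := h
      _ = (n : ℝ)⁻¹ * ∑ i, c i := by rw [Finset.mul_sum]
      _ = 2 := by rw [hsumc]; field_simp
  have hprodP : (0 : ℝ) ≤ ∏ i, v i (P i) := Finset.prod_nonneg fun i _ => hnonneg i _
  have hprodA : ∏ i, v i (A i) ≤ (∏ i, c i) * ∏ i, v i (P i) := by
    rw [← Finset.prod_mul_distrib]
    exact Finset.prod_le_prod (fun i _ => hnonneg i _) (fun i _ => key i)
  have h1 : (∏ i, v i (A i)) ^ ((n : ℝ)⁻¹) ≤ ((∏ i, c i) * ∏ i, v i (P i)) ^ ((n : ℝ)⁻¹) :=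
    Real.rpow_le_rpow (Finset.prod_nonneg fun i _ => hnonneg i _) hprodA (by positivity)
  have h2 : ((∏ i, c i) * ∏ i, v i (P i)) ^ ((n : ℝ)⁻¹) =
      (∏ i, c i) ^ ((n : ℝ)⁻¹) * (∏ i, v i (P i)) ^ ((n : ℝ)⁻¹) :=
    Real.mul_rpow (Finset.prod_nonneg fun i _ => hc0 i) hprodP
  have h3 : (∏ i, c i) ^ ((n : ℝ)⁻¹) * (∏ i, v i (P i)) ^ ((n : ℝ)⁻¹) ≤
      2 * (∏ i, v i (P i)) ^ ((n : ℝ)⁻¹) :=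
    mul_le_mul_of_nonneg_right hAM (Real.rpow_nonneg hprodP _)
  have hP0 : (0 : ℝ) ≤ (∏ i, v i (P i)) ^ ((n : ℝ)⁻¹) := Real.rpow_nonneg hprodP _
  nlinarith [h1, h2.le, h2.ge, h3]
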